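/- Lindenbaum lemma for IMCalc: if Γ ∪ {φ} is a set of L-formulas with Γ ⊬_{IMCalc} φ, then there exists a prime theory Γ' with Γ ⊆ Γ' and φ ∉ Γ'. -/

import Mathlib

/-
Common formalisation of the syntax and semantics of the intuitionistic
monotone modal logic IM, its generalised Hilbert calculi, intuitionistic
neighbourhood models, IFOM-structures, and related constructions.
-/

namespace IMPaper

/-- Formulas of the monotone modal language L. -/
inductive Formula : Type
  | prop : ℕ → Formula
  | bot  : Formula
  | and  : Formula → Formula → Formula
  | or   : Formula → Formula → Formula
  | imp  : Formula → Formula → Formula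
  | box  : Formula → Formula
  | dia  : Formula → Formula
deriving DecidableEq

/-- Negation: ¬φ abbreviates φ → ⊥. -/
def Formula.neg (φ : Formula) : Formula := φ.imp .bot

/-- Top: ⊤ abbreviates ⊥ → ⊥. -/
def Formula.top : Formula := Formula.bot.imp .bot

/-- Substitution of formulas for proposition letters. -/
def Formula.subst (σ : ℕ → Formula) : Formula → Formula
  | .prop i   => σ i
  | .bot      => .bot
  | .and φ ψ  => .and (φ.subst σ) (ψ.subst σ)
  | .or φ ψ   => .or (φ.subst σ) (ψ.subst σ)
  | .imp φ ψ  => .imp (φ.subst σ) (ψ.subst σ)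
  | .box φ    => .box (φ.subst σ)
  | .dia φ    => .dia (φ.subst σ)

private def pp0 : Formula := .prop 0
private def pp1 : Formula := .prop 1
private def pp2 : Formula := .prop 2

/-- A standard axiomatisation of intuitionistic propositional logic. -/
def IpcAx : Set Formula :=
  { Formula.imp pp0 (.imp pp1 pp0),
    Formula.imp (.imp pp0 (.imp pp1 pp2)) (.imp (.imp pp0 pp1) (.imp pp0 pp2)),
    Formula.imp (.and pp0 pp1) pp0,
    Formula.imp (.and pp0 pp1) pp1,
    Formula.imp pp0 (.imp pp1 (.and pp0 pp1)),
    Formula.imp pp0 (.or pp0 pp1),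
    Formula.imp pp1 (.or pp0 pp1),
    Formula.imp (.imp pp0 pp2) (.imp (.imp pp1 pp2) (.imp (.or pp0 pp1) pp2)),
    Formula.imp .bot pp0 }

/-- All substitution instances of a set of formulas. -/
def Instances (Ax : Set Formula) : Set Formula :=
  {φ | ∃ ψ ∈ Ax, ∃ σ, φ = ψ.subst σ}

/-- 𝒜x: all substitution instances of Ax together with all substitution
instances of the axioms of intuitionistic propositional logic. -/
def ScrAx (Ax : Set Formula) : Set Formula := Instances Ax ∪ Instances IpcAx

/-- The generalised Hilbert calculus GHC(Ax). -/
inductive GHC (Ax : Set Formula) : Set Formula → Formula → Prop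
  | el {Γ : Set Formula} {φ : Formula} : φ ∈ Γ → GHC Ax Γ φ
  | ax {Γ : Set Formula} {φ : Formula} : φ ∈ ScrAx Ax → GHC Ax Γ φ
  | mp {Γ : Set Formula} {φ ψ : Formula} :
      GHC Ax Γ φ → GHC Ax Γ (φ.imp ψ) → GHC Ax Γ ψ
  | monBox {Γ : Set Formula} {φ ψ : Formula} :
      GHC Ax ∅ (φ.imp ψ) → GHC Ax Γ ((Formula.box φ).imp (Formula.box ψ))
  | monDia {Γ : Set Formula} {φ ψ : Formula} :
      GHC Ax ∅ (φ.imp ψ) → GHC Ax Γ ((Formula.dia φ).imp (Formula.dia ψ))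

/-- The axioms (neg_a) and (I_◇) of the calculus IMCalc. -/
def IMAx : Set Formula :=
  { Formula.imp ((Formula.box pp0).and (Formula.dia pp0.neg)) .bot,
    Formula.imp ((Formula.box Formula.top).imp (Formula.dia pp0)) (Formula.dia pp0) }

/-- Derivability in the calculus IMCalc = GHC({(□p ∧ ◇¬p) → ⊥, (□⊤ → ◇p) → ◇p}). -/
def IMC : Set Formula → Formula → Prop := GHC IMAx

/-- An intuitionistic neighbourhood: a partial function W ⇀ 𝒫(W), encoded as a
domain together with a (total) value function whose values matter on the domain. -/
structure Nbhd (W : Type) where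
  dom : Set W
  val : W → Set W

/-- The data of an intuitionistic neighbourhood model. -/
structure INStruct (W : Type) where
  le : W → W → Prop
  N : Set (Nbhd W)
  V : ℕ → Set W

variable {W W' : Type}

/-- A set is upward closed w.r.t. the order of the structure. -/
def INStruct.Up (M : INStruct W) (s : Set W) : Prop :=
  ∀ ⦃w v : W⦄, M.le w v → w ∈ s → v ∈ s

/-- `M` is an intuitionistic neighbourhood model: the order is a partial order,
the domain of every neighbourhood is upward closed, and the valuation assigns
upward closed sets to proposition letters. -/
def INStruct.IsModel (M : INStruct W) : Prop :=
  IsPartialOrder W M.le ∧ (∀ a ∈ M.N, M.Up a.dom) ∧ ∀ i, M.Up (M.V i)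

/-- Truth of a formula at a world of an intuitionistic neighbourhood model. -/
def INStruct.sat (M : INStruct W) : Formula → W → Prop
  | .prop i, w  => w ∈ M.V i
  | .bot, _     => False
  | .and φ ψ, w => M.sat φ w ∧ M.sat ψ w
  | .or φ ψ, w  => M.sat φ w ∨ M.sat ψ w
  | .imp φ ψ, w => ∀ v, M.le w v → M.sat φ v → M.sat ψ v
  | .box φ, w   => ∃ a ∈ M.N, w ∈ a.dom ∧
      ∀ w', M.le w w' → ∀ v ∈ a.val w', M.sat φ v
  | .dia φ, w   => ∀ w', M.le w w' → ∀ a ∈ M.N, w' ∈ a.dom →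
      ∃ v ∈ a.val w', M.sat φ v

/-- Semantic consequence over the class of all intuitionistic neighbourhood models. -/
def INConseq (Γ : Set Formula) (φ : Formula) : Prop :=
  ∀ (W : Type) (M : INStruct W), M.IsModel →
    ∀ w : W, (∀ ψ ∈ Γ, M.sat ψ w) → M.sat φ w

/-- A coherent intuitionistic neighbourhood: conditions (N1) and (N2). -/
def INStruct.CoherentNbhd (M : INStruct W) (a : Nbhd W) : Prop :=
  (∀ ⦃w w' : W⦄, M.le w w' → w ∈ a.dom → ∀ v ∈ a.val w, ∃ v' ∈ a.val w', M.le v v') ∧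
  (∀ ⦃w : W⦄, w ∈ a.dom → ∀ v ∈ a.val w, ∀ v', M.le v v' →
      ∃ w', M.le w w' ∧ v' ∈ a.val w')

/-- A model is coherent if all its intuitionistic neighbourhoods are coherent. -/
def INStruct.Coherent (M : INStruct W) : Prop := ∀ a ∈ M.N, M.CoherentNbhd a

/-- Semantic consequence over the class of coherent intuitionistic neighbourhood models. -/
def CohConseq (Γ : Set Formula) (φ : Formula) : Prop :=
  ∀ (W : Type) (M : INStruct W), M.IsModel → M.Coherent →
    ∀ w : W, (∀ ψ ∈ Γ, M.sat ψ w) → M.sat φ w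

/-- The relation R: w R v iff v ∈ a(w) for some neighbourhood a of w. -/
def INStruct.R (M : INStruct W) (w v : W) : Prop :=
  ∃ a ∈ M.N, w ∈ a.dom ∧ v ∈ a.val w

/-- R~-Cartesian: w ≤~ v R~ w implies w = v (with ~ the equivalence closures). -/
def INStruct.RCartesian (M : INStruct W) : Prop :=
  ∀ w v, Relation.EqvGen M.le w v → Relation.EqvGen M.R v w → w = v

/-- N-Cartesian: w R~ v and w, v ∈ dom(a) imply a(w) = a(v). -/
def INStruct.NCartesian (M : INStruct W) : Prop :=
  ∀ a ∈ M.N, ∀ w v, Relation.EqvGen M.R w v → w ∈ a.dom → v ∈ a.dom →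
    a.val w = a.val v

/-- Cartesian: both R~-Cartesian and N-Cartesian. -/
def INStruct.Cartesian (M : INStruct W) : Prop := M.RCartesian ∧ M.NCartesian

/-- Isomorphism of intuitionistic neighbourhood structures. -/
def Isomorphic (M : INStruct W) (M' : INStruct W') : Prop :=
  ∃ (α : W → W') (ν : Nbhd W → Nbhd W'),
    Function.Bijective α ∧ Set.BijOn ν M.N M'.N ∧
    (∀ w v, M.le w v ↔ M'.le (α w) (α v)) ∧
    (∀ a ∈ M.N, ∀ w, w ∈ a.dom ↔ α w ∈ (ν a).dom) ∧
    (∀ a ∈ M.N, ∀ u ∈ a.dom, ∀ w, w ∈ a.val u ↔ α w ∈ (ν a).val (α u)) ∧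
    (∀ i w, w ∈ M.V i ↔ α w ∈ M'.V i)

end IMPaper
namespace IMPaper

/-- A prime theory: deductively closed (for IMCalc), has the disjunction
property, and is consistent. -/
def PrimeTheory (Γ : Set Formula) : Prop :=
  (∀ φ, IMC Γ φ → φ ∈ Γ) ∧
  (∀ φ ψ, Formula.or φ ψ ∈ Γ → φ ∈ Γ ∨ ψ ∈ Γ) ∧
  Formula.bot ∉ Γ

/-- A maximal prime theory: one not properly contained in any other prime theory. -/
def MaxPrime (Γ : Set Formula) : Prop :=
  PrimeTheory Γ ∧ ∀ Δ, PrimeTheory Δ → Γ ⊆ Δ → Δ = Γ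

/-- Worlds of the canonical model: pairs (Γ, n) with Γ a prime theory, where
n = 0 unless Γ is maximal. -/
def CanW : Type :=
  {p : Set Formula × ℕ // PrimeTheory p.1 ∧ (¬ MaxPrime p.1 → p.2 = 0)}

/-- The canonical order: (Γ,n) ⊂< (Γ',n') iff Γ ⊆ Γ' and n ≤ n'. -/
def canLe (p q : CanW) : Prop := p.1.1 ⊆ q.1.1 ∧ p.1.2 ≤ q.1.2

/-- The canonical neighbourhood a_φ, defined at (Γ,n) iff □φ ∈ Γ, with constant
value φ̃ = {(Δ,m) : φ ∈ Δ}. -/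
def canA (φ : Formula) : Nbhd CanW where
  dom := {p | Formula.box φ ∈ p.1.1}
  val := fun _ => {q | φ ∈ q.1.1}

/-- The canonical neighbourhood b_{ψ,Δ,m}: defined exactly on the upset of
(Δ,m), with value W ∖ ψ̃ at (Δ,m) itself and the full set strictly above. -/
def canB (ψ : Formula) (Δm : CanW) : Nbhd CanW where
  dom := {p | canLe Δm p}
  val := fun p => {q | p = Δm → ψ ∉ q.1.1}

/-- The canonical model of IMCalc. -/
def canStruct : INStruct CanW where
  le := canLe
  N := {b | (∃ φ, b = canA φ) ∨
        ∃ (ψ : Formula) (Δm : CanW), Formula.dia ψ ∉ Δm.1.1 ∧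
          Formula.box Formula.top ∈ Δm.1.1 ∧ b = canB ψ Δm}
  V := fun i => {p | Formula.prop i ∈ p.1.1}

end IMPaper
namespace IMPaper


lemma ghc_mono {Ax : Set Formula} {Γ Δ : Set Formula} {φ : Formula}
    (hs : Γ ⊆ Δ) (h : GHC Ax Γ φ) : GHC Ax Δ φ := by
  induction h generalizing Δ with
  | el h => exact .el (hs h)
  | ax h => exact .ax h
  | mp _ _ ih1 ih2 => exact .mp (ih1 hs) (ih2 hs)
  | monBox h => exact .monBox h
  | monDia h => exact .monDia h

lemma ghc_compact {Ax Γ} {φ : Formula} (h : GHC Ax Γ φ) :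
    ∃ Γ0 : Set Formula, Γ0 ⊆ Γ ∧ Γ0.Finite ∧ GHC Ax Γ0 φ := by
  induction h with
  | @el _ ψ h => exact ⟨{ψ}, by simpa using h, Set.finite_singleton _, .el rfl⟩
  | ax h => exact ⟨∅, by simp, Set.finite_empty, .ax h⟩
  | mp _ _ ih1 ih2 =>
    obtain ⟨A, hA, hAf, dA⟩ := ih1; obtain ⟨B, hB, hBf, dB⟩ := ih2
    exact ⟨A ∪ B, Set.union_subset hA hB, hAf.union hBf,
      .mp (ghc_mono Set.subset_union_left dA) (ghc_mono Set.subset_union_right dB)⟩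
  | monBox h _ => exact ⟨∅, by simp, Set.finite_empty, .monBox h⟩
  | monDia h _ => exact ⟨∅, by simp, Set.finite_empty, .monDia h⟩

lemma ghc_cut {Ax : Set Formula} {Γ Δ : Set Formula} {φ : Formula}
    (hΔ : ∀ ψ ∈ Δ, GHC Ax Γ ψ) (h : GHC Ax Δ φ) : GHC Ax Γ φ := by
  induction h with
  | el h => exact hΔ _ h
  | ax h => exact .ax h
  | mp _ _ ih1 ih2 => exact .mp (ih1 hΔ) (ih2 hΔ)
  | monBox h => exact .monBox h
  | monDia h => exact .monDia h

lemma ax_inst {Ax Γ} (ψ : Formula) (hψ : ψ ∈ IpcAx) (σ : ℕ → Formula) :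
    GHC Ax Γ (ψ.subst σ) := .ax (Or.inr ⟨ψ, hψ, σ, rfl⟩)

lemma axK {Ax Γ} (a b : Formula) : GHC Ax Γ (a.imp (b.imp a)) := by
  have := ax_inst (Ax := Ax) (Γ := Γ) (Formula.imp pp0 (.imp pp1 pp0))
    (by simp [IpcAx]) (fun n => if n = 0 then a else b)
  simpa [Formula.subst, pp0, pp1] using this

lemma axS {Ax Γ} (a b c : Formula) :
    GHC Ax Γ ((a.imp (b.imp c)).imp ((a.imp b).imp (a.imp c))) := by
  have := ax_inst (Ax := Ax) (Γ := Γ)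
    (Formula.imp (.imp pp0 (.imp pp1 pp2)) (.imp (.imp pp0 pp1) (.imp pp0 pp2)))
    (by simp [IpcAx]) (fun n => if n = 0 then a else if n = 1 then b else c)
  simpa [Formula.subst, pp0, pp1, pp2] using this

lemma axOr {Ax Γ} (a b c : Formula) :
    GHC Ax Γ ((a.imp c).imp ((b.imp c).imp ((Formula.or a b).imp c))) := by
  have := ax_inst (Ax := Ax) (Γ := Γ)
    (Formula.imp (.imp pp0 pp2) (.imp (.imp pp1 pp2) (.imp (.or pp0 pp1) pp2)))
    (by simp [IpcAx]) (fun n => if n = 0 then a else if n = 1 then b else c)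
  simpa [Formula.subst, pp0, pp1, pp2] using this

lemma axEfq {Ax Γ} (a : Formula) : GHC Ax Γ (Formula.bot.imp a) := by
  have := ax_inst (Ax := Ax) (Γ := Γ) (Formula.imp .bot pp0)
    (by simp [IpcAx]) (fun _ => a)
  simpa [Formula.subst, pp0] using this

lemma ghc_id {Ax Γ} (a : Formula) : GHC Ax Γ (a.imp a) :=
  .mp (axK a a) (.mp (axK a (a.imp a)) (axS a (a.imp a) a))

lemma deduction {Ax} {Γ : Set Formula} {χ φ : Formula}
    (h : GHC Ax (insert χ Γ) φ) : GHC Ax Γ (χ.imp φ) := by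
  generalize hΔ : insert χ Γ = Δ at h
  induction h with
  | @el _ ψ hmem =>
    subst hΔ
    rcases hmem with rfl | hmem
    · exact ghc_id _
    · exact .mp (.el hmem) (axK _ _)
  | ax hmem => exact .mp (.ax hmem) (axK _ _)
  | @mp _ α β _ _ ih1 ih2 =>
    exact .mp (ih1 hΔ) (.mp (ih2 hΔ) (axS χ α β))
  | monBox hpre => exact .mp (.monBox hpre) (axK _ _)
  | monDia hpre => exact .mp (.monDia hpre) (axK _ _)

lemma finite_subset_chain {α : Type*} {c : Set (Set α)} (hc : IsChain (· ⊆ ·) c)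
    (hne : c.Nonempty) {F : Set α} (hF : F.Finite) :
    F ⊆ ⋃₀ c → ∃ t ∈ c, F ⊆ t := by
  refine Set.Finite.induction_on (motive := fun F _ => F ⊆ ⋃₀ c → ∃ t ∈ c, F ⊆ t) F hF
    (fun _ => ⟨hne.choose, hne.choose_spec, by simp⟩) ?_
  intro a s _ _ ih hsub
  obtain ⟨t, htc, htF⟩ := ih (fun x hx => hsub (Set.mem_insert_of_mem _ hx))
  obtain ⟨u, huc, hau⟩ := hsub (Set.mem_insert _ _)
  rcases hc.total htc huc with hle | hle
  · exact ⟨u, huc, Set.insert_subset hau (htF.trans hle)⟩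
  · exact ⟨t, htc, Set.insert_subset (hle hau) htF⟩

/-- Lindenbaum lemma for IMCalc: if Γ ⊬_{IMCalc} φ then there is
a prime theory Γ' ⊇ Γ with φ ∉ Γ'. -/
theorem lindenbaum (Γ : Set Formula) (φ : Formula) (h : ¬ IMC Γ φ) :
    ∃ Γ' : Set Formula, PrimeTheory Γ' ∧ Γ ⊆ Γ' ∧ φ ∉ Γ' := by
  classical
  set S : Set (Set Formula) := {Δ | Γ ⊆ Δ ∧ ¬ IMC Δ φ} with hSdef
  have hΓS : Γ ∈ S := ⟨subset_rfl, h⟩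
  obtain ⟨Δ, hΓΔ, hΔS, hmax⟩ := zorn_subset_nonempty S (by
    intro c hcS hchain hcne
    refine ⟨⋃₀ c, ⟨?_, ?_⟩, fun s hs => Set.subset_sUnion_of_mem hs⟩
    · obtain ⟨t, htc⟩ := hcne
      exact ((hcS htc).1).trans (Set.subset_sUnion_of_mem htc)
    · intro hder
      obtain ⟨Γ0, hΓ0sub, hΓ0fin, hΓ0der⟩ := ghc_compact hder
      obtain ⟨t, htc, hΓ0t⟩ := finite_subset_chain hchain hcne hΓ0fin hΓ0sub
      exact (hcS htc).2 (ghc_mono hΓ0t hΓ0der)) Γ hΓS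
  have hΔnder : ¬ IMC Δ φ := hΔS.2
  -- maximality: anything we can safely add is already in Δ
  have hadd : ∀ ψ : Formula, ¬ IMC (insert ψ Δ) φ → ψ ∈ Δ := by
    intro ψ hψ
    have : insert ψ Δ ∈ S := ⟨hΔS.1.trans (Set.subset_insert _ _), hψ⟩
    have := hmax this (Set.subset_insert _ _)
    exact this (Set.mem_insert _ _)
  refine ⟨Δ, ⟨?_, ?_, ?_⟩, hΔS.1, fun hφ => hΔnder (.el hφ)⟩
  · -- deductive closure
    intro ψ hder
    refine hadd ψ (fun hd => hΔnder ?_)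
    refine ghc_cut (fun χ hχ => ?_) hd
    rcases hχ with rfl | hχ
    · exact hder
    · exact .el hχ
  · -- disjunction property
    intro χ1 χ2 hor
    by_contra hcon
    push_neg at hcon
    have h1 : IMC (insert χ1 Δ) φ := by
      by_contra h1; exact hcon.1 (hadd _ h1)
    have h2 : IMC (insert χ2 Δ) φ := by
      by_contra h2; exact hcon.2 (hadd _ h2)
    have d1 : IMC Δ (χ1.imp φ) := deduction h1
    have d2 : IMC Δ (χ2.imp φ) := deduction h2
    exact hΔnder (.mp (.el hor) (.mp d2 (.mp d1 (axOr χ1 χ2 φ))))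
  · -- consistency
    intro hbot
    exact hΔnder (.mp (.el hbot) (axEfq φ))


end IMPaper
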